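/- Let ◁ be the covering relation of formal Baire space, inductively defined on pairs (a, U) with a ∈ ℕ* (finite sequences of naturals) and U ⊆ ℕ* by: (η) a ∈ U implies a ◁ U; (ζ) a ◁ U implies a⌢⟨k⟩ ◁ U for every k; (ϝ) if a⌢⟨n⟩ ◁ U for all n ∈ ℕ then a ◁ U. Let ◁' be the relation inductively defined by only the η and ϝ clauses. Then for all a and U, a ◁ U if and only if a ◁' ext(U), where ext(U) = { a ∈ ℕ* | ∃ b ∈ U, b ⊑ a } is the upward closure of U under extension of finite sequences. -/
import Mathlib


/-- Initial segment of `α` of length `n`. -/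
def seg (α : ℕ → ℕ) (n : ℕ) : List ℕ := List.ofFn (fun i : Fin n => α i)

/-- `a` followed by the constant zero sequence. -/
def zext (a : List ℕ) : ℕ → ℕ := fun i => a.getD i 0

/-- Upward closure under extension. -/
def extU (U : Set (List ℕ)) : Set (List ℕ) := {a | ∃ b ∈ U, b <+: a}

/-- The cover of formal Baire space, generated by η, ζ, ϝ. -/
inductive Cover : List ℕ → Set (List ℕ) → Prop
  | eta {a : List ℕ} {U : Set (List ℕ)} : a ∈ U → Cover a U
  | zeta {a : List ℕ} {U : Set (List ℕ)} (k : ℕ) : Cover a U → Cover (a ++ [k]) U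
  | digamma {a : List ℕ} {U : Set (List ℕ)} : (∀ n, Cover (a ++ [n]) U) → Cover a U

/-- A spread: a decidable tree where every node has a child. -/
def IsSpread (T : Set (List ℕ)) : Prop :=
  (∀ a, a ∈ T ∨ a ∉ T) ∧ (∀ a b : List ℕ, a <+: b → b ∈ T → a ∈ T) ∧
  (∀ a ∈ T, ∃ n, a ++ [n] ∈ T)

/-- A fan: a finitely branching spread. -/
def IsFan (T : Set (List ℕ)) : Prop :=
  IsSpread T ∧ ∀ a ∈ T, ∃ N, ∀ n, a ++ [n] ∈ T → n ≤ N

/-- `α` is a path in the tree `T`. -/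
def IsPath (T : Set (List ℕ)) (α : ℕ → ℕ) : Prop := ∀ n, seg α n ∈ T

/-- A c-bar: a c-set barring every sequence. -/
def IsCBar (P : Set (List ℕ)) : Prop :=
  (∃ δ : List ℕ → ℕ, ∀ a, a ∈ P ↔ ∀ b, δ a = δ (a ++ b)) ∧
  (∀ α : ℕ → ℕ, ∃ n, seg α n ∈ P)

/-- Pointwise continuity for `F : ℕ^ℕ → ℕ`. -/
def PtwiseCts (F : (ℕ → ℕ) → ℕ) : Prop :=
  ∀ α : ℕ → ℕ, ∃ n, ∀ β : ℕ → ℕ, seg β n = seg α n → F β = F α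

/-- An inductive subset of ℕ*. -/
def Inductive (Q : Set (List ℕ)) : Prop := ∀ a, (∀ n, a ++ [n] ∈ Q) → a ∈ Q

/-- Preimage of a subset of ℕ under a relation r ⊆ ℕ* × ℕ. -/
def rInv (r : List ℕ → ℕ → Prop) (D : Set ℕ) : Set (List ℕ) := {a | ∃ n ∈ D, r a n}

/-- Formal topology map from formal Baire space to formal natural numbers. -/
def IsFTopMap (r : List ℕ → ℕ → Prop) : Prop :=
  Cover [] (rInv r Set.univ) ∧
  ∀ n m : ℕ, ∀ a ∈ extU (rInv r {n}) ∩ extU (rInv r {m}),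
    Cover a (rInv r {l | l = n ∧ n = m})

/-- `F` is formally continuous: induced by a formal topology map on points. -/
def FormallyCts (F : (ℕ → ℕ) → ℕ) : Prop :=
  ∃ r : List ℕ → ℕ → Prop, IsFTopMap r ∧
    ∀ α : ℕ → ℕ, {n | ∃ k, r (seg α k) n} = {F α}

/-- The class of Brouwer-operations. -/
inductive IsBrouwerOp : (List ℕ → ℕ) → Prop
  | const (n : ℕ) : IsBrouwerOp (fun _ => n + 1)
  | sup {γ : List ℕ → ℕ} : γ [] = 0 →
      (∀ n, IsBrouwerOp (fun a => γ (n :: a))) → IsBrouwerOp γ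

/-- `bar γ`: minimal sequences on which `γ` is positive. -/
def barOf (γ : List ℕ → ℕ) : Set (List ℕ) :=
  {a | 0 < γ a ∧ ∀ b : List ℕ, b <+: a → b ≠ a → γ b = 0}

/-- The set presentation `Cov` of formal Baire space. -/
inductive Cov : List ℕ → Set (List ℕ) → Prop
  | single (a : List ℕ) : Cov a {a}
  | union {a : List ℕ} {U : ℕ → Set (List ℕ)} :
      (∀ n, Cov (a ++ [n]) (U n)) → Cov a (⋃ n, U n)

/-- The cover generated by η and ϝ only. -/
inductive Cover' : List ℕ → Set (List ℕ) → Prop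
  | eta {a : List ℕ} {U : Set (List ℕ)} : a ∈ U → Cover' a U
  | digamma {a : List ℕ} {U : Set (List ℕ)} : (∀ n, Cover' (a ++ [n]) U) → Cover' a U

lemma cover'_ext_step' {a : List ℕ} {V : Set (List ℕ)}
    (hV : ∀ b k, b ∈ V → b ++ [k] ∈ V) (h : Cover' a V) (k : ℕ) :
    Cover' (a ++ [k]) V := by
  induction h with
  | eta h => exact Cover'.eta (hV _ k h)
  | digamma h ih => exact h k

lemma cover'_ext_step {a : List ℕ} {U : Set (List ℕ)} (h : Cover' a (extU U)) (k : ℕ) :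
    Cover' (a ++ [k]) (extU U) := by
  refine cover'_ext_step' ?_ h k
  rintro b j ⟨c, hc, hp⟩
  exact ⟨c, hc, hp.trans (List.prefix_append _ _)⟩

lemma cover_of_prefix {b a : List ℕ} {U : Set (List ℕ)} (hb : b ∈ U) (hp : b <+: a) :
    Cover a U := by
  obtain ⟨c, rfl⟩ := hp
  induction c using List.reverseRecOn with
  | nil => simpa using Cover.eta hb
  | append_singleton c k ih =>
    rw [← List.append_assoc]
    exact Cover.zeta k ih

theorem zeta_elimination (a : List ℕ) (U : Set (List ℕ)) :
    Cover a U ↔ Cover' a (extU U) := by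
  constructor
  · intro h
    induction h with
    | eta h => exact Cover'.eta ⟨_, h, List.prefix_refl _⟩
    | zeta k _ ih => exact cover'_ext_step ih k
    | digamma _ ih => exact Cover'.digamma ih
  · intro h
    have : ∀ (V : Set (List ℕ)) (b : List ℕ), Cover' b V → V = extU U → Cover b U := by
      intro V b h
      induction h with
      | eta h => rintro rfl; obtain ⟨c, hc, hp⟩ := h; exact cover_of_prefix hc hp
      | digamma _ ih => intro hVU; exact Cover.digamma fun n => ih n hVU
    exact this _ _ h rfl
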